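/- For every antichain Γ in the poset Δ⁺ of positive roots of type A_n, the OY-number is invariant under duality: 𝒴(Γ*) = 𝒴(Γ). -/

import Mathlib

open Finset

/-- The root order on pairs: `(i,j) ≼ (i',j')` iff `i' ≤ i` and `j ≤ j'`. -/
def rle (p q : ℕ × ℕ) : Prop := q.1 ≤ p.1 ∧ p.2 ≤ q.2

instance : DecidableRel rle := fun p q =>
  inferInstanceAs (Decidable (q.1 ≤ p.1 ∧ p.2 ≤ q.2))

/-- The positive roots of type `A_n`, modelled as pairs `(i,j)` with `1 ≤ i ≤ j ≤ n`. -/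
def roots (n : ℕ) : Finset (ℕ × ℕ) :=
  ((Finset.Icc 1 n) ×ˢ (Finset.Icc 1 n)).filter (fun p => p.1 ≤ p.2)

/-- `Γ` is an antichain in `Δ⁺(A_n)`: a set of pairwise incomparable positive roots. -/
def IsAC (n : ℕ) (Γ : Finset (ℕ × ℕ)) : Prop :=
  Γ ⊆ roots n ∧ ∀ p ∈ Γ, ∀ q ∈ Γ, rle p q → p = q

/-- The upper ideal `I(Γ) = {x ∈ Δ⁺ : ∃ γ ∈ Γ, γ ≼ x}` generated by `Γ`. -/
def upIdeal (n : ℕ) (Γ : Finset (ℕ × ℕ)) : Finset (ℕ × ℕ) :=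
  (roots n).filter (fun x => ∃ γ ∈ Γ, rle γ x)

/-- The set of maximal elements of `S` with respect to the root order. -/
def maxOf (S : Finset (ℕ × ℕ)) : Finset (ℕ × ℕ) :=
  S.filter (fun x => ∀ y ∈ S, rle x y → y = x)

/-- The set of minimal elements of `S` with respect to the root order. -/
def minOf (S : Finset (ℕ × ℕ)) : Finset (ℕ × ℕ) :=
  S.filter (fun x => ∀ y ∈ S, rle y x → y = x)

/-- The reverse operator `𝔛`, sending an antichain `Γ` to the set of maximal
elements of `Δ⁺ \ I(Γ)`. -/
def Xrev (n : ℕ) (Γ : Finset (ℕ × ℕ)) : Finset (ℕ × ℕ) :=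
  maxOf (roots n \ upIdeal n Γ)

/-- `r_Γ(γ) = #(I(Γ) \ {γ})_min − #I(Γ)_min + 1`. -/
def rGam (n : ℕ) (Γ : Finset (ℕ × ℕ)) (γ : ℕ × ℕ) : ℤ :=
  ((minOf (upIdeal n Γ \ {γ})).card : ℤ) - ((minOf (upIdeal n Γ)).card : ℤ) + 1

/-- The OY-number `𝒴(Γ) = Σ_{γ ∈ Γ} r_Γ(γ)`; in particular `𝒴(∅) = 0`. -/
def OY (n : ℕ) (Γ : Finset (ℕ × ℕ)) : ℤ := ∑ γ ∈ Γ, rGam n Γ γ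

/-- The dual antichain `Γ*`: if `Γ` has first coordinates `𝐢` and second
coordinates `𝐣`, then `Γ*` pairs the elements of `[n] \ 𝐣` (listed increasingly,
as first coordinates) with the elements of `[n] \ 𝐢` (listed increasingly,
as second coordinates). -/
def dualAC (n : ℕ) (Γ : Finset (ℕ × ℕ)) : Finset (ℕ × ℕ) :=
  let iStar := ((Finset.Icc 1 n) \ (Γ.image Prod.snd)).sort (· ≤ ·)
  let jStar := ((Finset.Icc 1 n) \ (Γ.image Prod.fst)).sort (· ≤ ·)
  (Finset.range iStar.length).image (fun t => (iStar.getD t 0, jStar.getD t 0))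

/- ======================= auxiliary lemmas ======================= -/

lemma rle_refl' (p : ℕ × ℕ) : rle p p := ⟨le_refl _, le_refl _⟩

lemma rle_antisymm' {p q : ℕ × ℕ} (h1 : rle p q) (h2 : rle q p) : p = q :=
  Prod.ext (le_antisymm h2.1 h1.1) (le_antisymm h1.2 h2.2)

lemma rle_trans' {p q r : ℕ × ℕ} (h1 : rle p q) (h2 : rle q r) : rle p r :=
  ⟨h2.1.trans h1.1, h1.2.trans h2.2⟩

lemma mem_roots' {n : ℕ} {p : ℕ × ℕ} : p ∈ roots n ↔ 1 ≤ p.1 ∧ p.2 ≤ n ∧ p.1 ≤ p.2 := by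
  simp only [roots, Finset.mem_filter, Finset.mem_product, Finset.mem_Icc]
  omega

lemma mem_upIdeal' {n : ℕ} {Γ : Finset (ℕ × ℕ)} {x : ℕ × ℕ} :
    x ∈ upIdeal n Γ ↔ x ∈ roots n ∧ ∃ γ ∈ Γ, rle γ x := Finset.mem_filter

lemma mem_minOf' {S : Finset (ℕ × ℕ)} {x : ℕ × ℕ} :
    x ∈ minOf S ↔ x ∈ S ∧ ∀ y ∈ S, rle y x → y = x := Finset.mem_filter

lemma fst_injOn {n : ℕ} {Γ : Finset (ℕ × ℕ)} (h : IsAC n Γ) :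
    ∀ p ∈ Γ, ∀ q ∈ Γ, p.1 = q.1 → p = q := by
  intro p hp q hq he
  rcases le_total p.2 q.2 with h2 | h2
  · exact h.2 p hp q hq ⟨he.ge, h2⟩
  · exact (h.2 q hq p hp ⟨he.le, h2⟩).symm

lemma snd_injOn {n : ℕ} {Γ : Finset (ℕ × ℕ)} (h : IsAC n Γ) :
    ∀ p ∈ Γ, ∀ q ∈ Γ, p.2 = q.2 → p = q := by
  intro p hp q hq he
  rcases le_total p.1 q.1 with h1 | h1
  · exact (h.2 q hq p hp ⟨h1, he.ge⟩).symm
  · exact h.2 p hp q hq ⟨h1, he.le⟩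

lemma min_upIdeal {n : ℕ} {Γ : Finset (ℕ × ℕ)} (h : IsAC n Γ) :
    minOf (upIdeal n Γ) = Γ := by
  ext x
  rw [mem_minOf']
  constructor
  · rintro ⟨hxI, hmin⟩
    obtain ⟨hxr, γ, hγ, hγx⟩ := mem_upIdeal'.1 hxI
    have : γ = x := hmin γ (mem_upIdeal'.2 ⟨h.1 hγ, γ, hγ, rle_refl' γ⟩) hγx
    exact this ▸ hγ
  · intro hx
    refine ⟨mem_upIdeal'.2 ⟨h.1 hx, x, hx, rle_refl' x⟩, ?_⟩
    intro y hy hyx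
    obtain ⟨hyr, δ, hδ, hδy⟩ := mem_upIdeal'.1 hy
    have hδx : δ = x := h.2 δ hδ x hx (rle_trans' hδy hyx)
    subst hδx
    exact rle_antisymm' hyx hδy

def extra (n : ℕ) (Γ : Finset (ℕ × ℕ)) (γ : ℕ × ℕ) : Finset (ℕ × ℕ) :=
  (if 2 ≤ γ.1 ∧ γ.1 - 1 ∉ Γ.image Prod.fst then {(γ.1 - 1, γ.2)} else ∅) ∪
  (if γ.2 + 1 ≤ n ∧ γ.2 + 1 ∉ Γ.image Prod.snd then {(γ.1, γ.2 + 1)} else ∅)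

lemma mem_extra {n : ℕ} {Γ : Finset (ℕ × ℕ)} {γ x : ℕ × ℕ} :
    x ∈ extra n Γ γ ↔
      ((2 ≤ γ.1 ∧ γ.1 - 1 ∉ Γ.image Prod.fst) ∧ x = (γ.1 - 1, γ.2)) ∨
      ((γ.2 + 1 ≤ n ∧ γ.2 + 1 ∉ Γ.image Prod.snd) ∧ x = (γ.1, γ.2 + 1)) := by
  unfold extra
  split_ifs with h1 h2 <;> simp_all

lemma mem_sdiff_single {n : ℕ} {Γ : Finset (ℕ × ℕ)} {γ x : ℕ × ℕ} :
    x ∈ upIdeal n Γ \ {γ} ↔ x ∈ upIdeal n Γ ∧ x ≠ γ := by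
  rw [Finset.mem_sdiff, Finset.mem_singleton]


lemma min_erase {n : ℕ} {Γ : Finset (ℕ × ℕ)} (h : IsAC n Γ) {γ : ℕ × ℕ} (hγ : γ ∈ Γ) :
    minOf (upIdeal n Γ \ {γ}) = (Γ.erase γ) ∪ extra n Γ γ := by
  obtain ⟨hγ1, hγn, hγij⟩ := mem_roots'.1 (h.1 hγ)
  ext x
  rw [mem_minOf', Finset.mem_union, Finset.mem_erase, mem_extra]
  constructor
  · rintro ⟨hxs, hmin⟩
    obtain ⟨hxI, hxne⟩ := mem_sdiff_single.1 hxs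
    obtain ⟨hxr, δ, hδ, hδx⟩ := mem_upIdeal'.1 hxI
    obtain ⟨hx1, hxn, hxij⟩ := mem_roots'.1 hxr
    by_cases hcase : ∃ δ' ∈ Γ, δ' ≠ γ ∧ rle δ' x
    · obtain ⟨δ', hδ'Γ, hne, hr⟩ := hcase
      have hex : δ' = x := hmin δ'
        (mem_sdiff_single.2 ⟨mem_upIdeal'.2 ⟨h.1 hδ'Γ, δ', hδ'Γ, rle_refl' δ'⟩, hne⟩) hr
      exact Or.inl ⟨hex ▸ hne, hex ▸ hδ'Γ⟩
    · push_neg at hcase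
      have hδγ : δ = γ := by
        by_contra hne
        exact hcase δ hδ hne hδx
      rw [hδγ] at hδx
      obtain ⟨hx1le, hx2ge⟩ := hδx
      -- hx1le : x.1 ≤ γ.1 , hx2ge : γ.2 ≤ x.2
      have claimA : ¬ (x.1 < γ.1 ∧ γ.2 < x.2) := by
        rintro ⟨ha, hb⟩
        have hy : (x.1, x.2 - 1) ∈ upIdeal n Γ \ {γ} := by
          refine mem_sdiff_single.2 ⟨mem_upIdeal'.2 ⟨mem_roots'.2
            ⟨(by omega : 1 ≤ x.1), (by omega : x.2 - 1 ≤ n), (by omega : x.1 ≤ x.2 - 1)⟩,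
            γ, hγ, ⟨(by omega : x.1 ≤ γ.1), (by omega : γ.2 ≤ x.2 - 1)⟩⟩, ?_⟩
          intro he
          have h1 : x.1 = γ.1 := by have := congrArg Prod.fst he; exact this
          omega
        have hex := hmin _ hy ⟨(le_refl x.1 : x.1 ≤ x.1), (by omega : x.2 - 1 ≤ x.2)⟩
        have h2 : x.2 - 1 = x.2 := by have := congrArg Prod.snd hex; exact this
        omega
      have hxne' : x.1 ≠ γ.1 ∨ x.2 ≠ γ.2 := by
        by_contra hc
        push_neg at hc
        exact hxne (Prod.ext hc.1 hc.2)
      rcases (show (x.2 = γ.2 ∧ x.1 < γ.1) ∨ (x.1 = γ.1 ∧ γ.2 < x.2) by omega) with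
        ⟨h2, h1⟩ | ⟨h1, h2⟩
      · -- left cover case : x = (γ.1 - 1, γ.2)
        have hx1eq : x.1 = γ.1 - 1 := by
          by_contra hne
          have hlt : x.1 < γ.1 - 1 := by omega
          have hy : (x.1 + 1, γ.2) ∈ upIdeal n Γ \ {γ} := by
            refine mem_sdiff_single.2 ⟨mem_upIdeal'.2 ⟨mem_roots'.2
              ⟨(by omega : 1 ≤ x.1 + 1), (by omega : γ.2 ≤ n), (by omega : x.1 + 1 ≤ γ.2)⟩,
              γ, hγ, ⟨(by omega : x.1 + 1 ≤ γ.1), (le_refl γ.2 : γ.2 ≤ γ.2)⟩⟩, ?_⟩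
            intro he
            have hf : x.1 + 1 = γ.1 := by have := congrArg Prod.fst he; exact this
            omega
          have hex := hmin _ hy ⟨(by omega : x.1 ≤ x.1 + 1), (by omega : γ.2 ≤ x.2)⟩
          have hf : x.1 + 1 = x.1 := by have := congrArg Prod.fst hex; exact this
          omega
        refine Or.inr (Or.inl ⟨⟨by omega, ?_⟩, Prod.ext (by omega) (by omega)⟩)
        intro hmem
        obtain ⟨δ', hδ'Γ, hδ'1⟩ := Finset.mem_image.1 hmem
        have hδ'ne : δ' ≠ γ := by
          intro he; rw [he] at hδ'1; omega
        have hδ'2 : δ'.2 < γ.2 := by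
          by_contra hc
          push_neg at hc
          exact hδ'ne (h.2 γ hγ δ' hδ'Γ ⟨(by omega : δ'.1 ≤ γ.1), hc⟩).symm
        have hy : δ' ∈ upIdeal n Γ \ {γ} :=
          mem_sdiff_single.2 ⟨mem_upIdeal'.2 ⟨h.1 hδ'Γ, δ', hδ'Γ, rle_refl' δ'⟩, hδ'ne⟩
        have hex := hmin _ hy ⟨(by omega : x.1 ≤ δ'.1), (by omega : δ'.2 ≤ x.2)⟩
        have hf : δ'.2 = x.2 := by have := congrArg Prod.snd hex; exact this
        omega
      · -- right cover case : x = (γ.1, γ.2 + 1)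
        have hx2eq : x.2 = γ.2 + 1 := by
          by_contra hne
          have hlt : γ.2 + 1 < x.2 := by omega
          have hy : (γ.1, x.2 - 1) ∈ upIdeal n Γ \ {γ} := by
            refine mem_sdiff_single.2 ⟨mem_upIdeal'.2 ⟨mem_roots'.2
              ⟨(by omega : 1 ≤ γ.1), (by omega : x.2 - 1 ≤ n), (by omega : γ.1 ≤ x.2 - 1)⟩,
              γ, hγ, ⟨(le_refl γ.1 : γ.1 ≤ γ.1), (by omega : γ.2 ≤ x.2 - 1)⟩⟩, ?_⟩
            intro he
            have hf : x.2 - 1 = γ.2 := by have := congrArg Prod.snd he; exact this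
            omega
          have hex := hmin _ hy ⟨(by omega : x.1 ≤ γ.1), (by omega : x.2 - 1 ≤ x.2)⟩
          have hf : x.2 - 1 = x.2 := by have := congrArg Prod.snd hex; exact this
          omega
        refine Or.inr (Or.inr ⟨⟨by omega, ?_⟩, Prod.ext (by omega) (by omega)⟩)
        intro hmem
        obtain ⟨δ', hδ'Γ, hδ'2⟩ := Finset.mem_image.1 hmem
        have hδ'ne : δ' ≠ γ := by
          intro he; rw [he] at hδ'2; omega
        have hδ'1 : γ.1 < δ'.1 := by
          by_contra hc
          push_neg at hc
          exact hδ'ne (h.2 γ hγ δ' hδ'Γ ⟨hc, (by omega : γ.2 ≤ δ'.2)⟩).symm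
        have hy : δ' ∈ upIdeal n Γ \ {γ} :=
          mem_sdiff_single.2 ⟨mem_upIdeal'.2 ⟨h.1 hδ'Γ, δ', hδ'Γ, rle_refl' δ'⟩, hδ'ne⟩
        have hex := hmin _ hy ⟨(by omega : x.1 ≤ δ'.1), (by omega : δ'.2 ≤ x.2)⟩
        have hf : δ'.1 = x.1 := by have := congrArg Prod.fst hex; exact this
        omega
  · rintro (⟨hne, hxΓ⟩ | ⟨⟨hi2, hnot⟩, hxeq⟩ | ⟨⟨hjn, hnot⟩, hxeq⟩)
    · refine ⟨mem_sdiff_single.2 ⟨mem_upIdeal'.2 ⟨h.1 hxΓ, x, hxΓ, rle_refl' x⟩, hne⟩, ?_⟩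
      intro y hy hyx
      obtain ⟨hyI, hyne⟩ := mem_sdiff_single.1 hy
      obtain ⟨hyr, δ, hδ, hδy⟩ := mem_upIdeal'.1 hyI
      have hδx : δ = x := h.2 δ hδ x hxΓ (rle_trans' hδy hyx)
      subst hδx
      exact rle_antisymm' hyx hδy
    · subst hxeq
      refine ⟨mem_sdiff_single.2 ⟨mem_upIdeal'.2 ⟨mem_roots'.2
        ⟨(by omega : 1 ≤ γ.1 - 1), (by omega : γ.2 ≤ n), (by omega : γ.1 - 1 ≤ γ.2)⟩,
        γ, hγ, ⟨(by omega : γ.1 - 1 ≤ γ.1), (le_refl γ.2 : γ.2 ≤ γ.2)⟩⟩, ?_⟩, ?_⟩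
      · intro he
        have hf : γ.1 - 1 = γ.1 := by have := congrArg Prod.fst he; exact this
        omega
      · intro y hy hyx
        obtain ⟨hyI, hyne⟩ := mem_sdiff_single.1 hy
        obtain ⟨hyr, δ, hδ, hδy⟩ := mem_upIdeal'.1 hyI
        obtain ⟨hδy1, hδy2⟩ := hδy
        have hyx1 : γ.1 - 1 ≤ y.1 := hyx.1
        have hyx2 : y.2 ≤ γ.2 := hyx.2
        have hδnot : δ.1 ≠ γ.1 - 1 := fun he => hnot (Finset.mem_image.2 ⟨δ, hδ, he⟩)
        have hδγ : δ = γ := h.2 δ hδ γ hγ ⟨(by omega : γ.1 ≤ δ.1), (by omega : δ.2 ≤ γ.2)⟩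
        rw [hδγ] at hδy1 hδy2
        -- hδy1 : y.1 ≤ γ.1, hδy2 : γ.2 ≤ y.2
        have hy2 : y.2 = γ.2 := by omega
        have hy1ne : y.1 ≠ γ.1 := fun he => hyne (Prod.ext he hy2)
        exact Prod.ext (show y.1 = γ.1 - 1 by omega) (show y.2 = γ.2 by omega)
    · subst hxeq
      refine ⟨mem_sdiff_single.2 ⟨mem_upIdeal'.2 ⟨mem_roots'.2
        ⟨(by omega : 1 ≤ γ.1), (by omega : γ.2 + 1 ≤ n), (by omega : γ.1 ≤ γ.2 + 1)⟩,
        γ, hγ, ⟨(le_refl γ.1 : γ.1 ≤ γ.1), (by omega : γ.2 ≤ γ.2 + 1)⟩⟩, ?_⟩, ?_⟩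
      · intro he
        have hf : γ.2 + 1 = γ.2 := by have := congrArg Prod.snd he; exact this
        omega
      · intro y hy hyx
        obtain ⟨hyI, hyne⟩ := mem_sdiff_single.1 hy
        obtain ⟨hyr, δ, hδ, hδy⟩ := mem_upIdeal'.1 hyI
        obtain ⟨hδy1, hδy2⟩ := hδy
        have hyx1 : γ.1 ≤ y.1 := hyx.1
        have hyx2 : y.2 ≤ γ.2 + 1 := hyx.2
        have hδnot : δ.2 ≠ γ.2 + 1 := fun he => hnot (Finset.mem_image.2 ⟨δ, hδ, he⟩)
        have hδγ : δ = γ := h.2 δ hδ γ hγ ⟨(by omega : γ.1 ≤ δ.1), (by omega : δ.2 ≤ γ.2)⟩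
        rw [hδγ] at hδy1 hδy2
        have hy1 : y.1 = γ.1 := by omega
        have hy2ne : y.2 ≠ γ.2 := fun he => hyne (Prod.ext hy1 he)
        exact Prod.ext (show y.1 = γ.1 by omega) (show y.2 = γ.2 + 1 by omega)


lemma extra_card {n : ℕ} {Γ : Finset (ℕ × ℕ)} (γ : ℕ × ℕ) :
    (extra n Γ γ).card =
      (if 2 ≤ γ.1 ∧ γ.1 - 1 ∉ Γ.image Prod.fst then 1 else 0)
      + (if γ.2 + 1 ≤ n ∧ γ.2 + 1 ∉ Γ.image Prod.snd then 1 else 0) := by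
  unfold extra
  split_ifs with h1 h2 h2
  · have hne : ((γ.1 - 1, γ.2) : ℕ × ℕ) ∉ ({(γ.1, γ.2 + 1)} : Finset (ℕ × ℕ)) := by
      simp only [Finset.mem_singleton]
      intro he
      have hf : γ.2 = γ.2 + 1 := by have := congrArg Prod.snd he; exact this
      omega
    have hne' : ((γ.1 - 1, γ.2) : ℕ × ℕ) ≠ (γ.1, γ.2 + 1) := by
      intro he
      have hf : γ.2 = γ.2 + 1 := by have := congrArg Prod.snd he; exact this
      omega
    rw [Finset.card_union_of_disjoint (Finset.disjoint_singleton.2 hne'),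
      Finset.card_singleton, Finset.card_singleton]
  · simp
  · simp
  · simp

lemma disj_extra {n : ℕ} {Γ : Finset (ℕ × ℕ)} (γ : ℕ × ℕ) :
    Disjoint (Γ.erase γ) (extra n Γ γ) := by
  rw [Finset.disjoint_left]
  intro z hz hz'
  have hzΓ : z ∈ Γ := Finset.mem_of_mem_erase hz
  rcases mem_extra.1 hz' with ⟨⟨_, hnot⟩, hzeq⟩ | ⟨⟨_, hnot⟩, hzeq⟩
  · exact hnot (Finset.mem_image.2 ⟨z, hzΓ, by rw [hzeq]⟩)
  · exact hnot (Finset.mem_image.2 ⟨z, hzΓ, by rw [hzeq]⟩)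

lemma rGam_eq {n : ℕ} {Γ : Finset (ℕ × ℕ)} (h : IsAC n Γ) {γ : ℕ × ℕ} (hγ : γ ∈ Γ) :
    rGam n Γ γ = (if 2 ≤ γ.1 ∧ γ.1 - 1 ∉ Γ.image Prod.fst then (1 : ℤ) else 0)
      + (if γ.2 + 1 ≤ n ∧ γ.2 + 1 ∉ Γ.image Prod.snd then (1 : ℤ) else 0) := by
  unfold rGam
  rw [min_upIdeal h, min_erase h hγ,
    Finset.card_union_of_disjoint (disj_extra γ), Finset.card_erase_of_mem hγ,
    extra_card γ]
  have hpos : 0 < Γ.card := Finset.card_pos.2 ⟨γ, hγ⟩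
  split_ifs <;> push_cast <;> omega

lemma OY_eq {n : ℕ} {Γ : Finset (ℕ × ℕ)} (h : IsAC n Γ) :
    OY n Γ = (((Γ.image Prod.fst).filter (fun a => 2 ≤ a ∧ a - 1 ∉ Γ.image Prod.fst)).card : ℤ)
           + (((Γ.image Prod.snd).filter (fun b => b + 1 ≤ n ∧ b + 1 ∉ Γ.image Prod.snd)).card : ℤ) := by
  unfold OY
  rw [Finset.sum_congr rfl (fun γ hγ => rGam_eq h hγ), Finset.sum_add_distrib]
  have e1 : ∑ x ∈ Γ, (if 2 ≤ x.1 ∧ x.1 - 1 ∉ Γ.image Prod.fst then (1:ℤ) else 0)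
      = ∑ a ∈ Γ.image Prod.fst, (if 2 ≤ a ∧ a - 1 ∉ Γ.image Prod.fst then (1:ℤ) else 0) :=
    (Finset.sum_image (g := Prod.fst) (f := fun a => if 2 ≤ a ∧ a - 1 ∉ Γ.image Prod.fst then (1:ℤ) else 0)
      (fun p hp q hq he => fst_injOn h p hp q hq he)).symm
  have e2 : ∑ x ∈ Γ, (if x.2 + 1 ≤ n ∧ x.2 + 1 ∉ Γ.image Prod.snd then (1:ℤ) else 0)
      = ∑ b ∈ Γ.image Prod.snd, (if b + 1 ≤ n ∧ b + 1 ∉ Γ.image Prod.snd then (1:ℤ) else 0) :=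
    (Finset.sum_image (g := Prod.snd) (f := fun b => if b + 1 ≤ n ∧ b + 1 ∉ Γ.image Prod.snd then (1:ℤ) else 0)
      (fun p hp q hq he => snd_injOn h p hp q hq he)).symm
  rw [e1, e2, Finset.sum_boole, Finset.sum_boole]

lemma subP {n : ℕ} {Γ : Finset (ℕ × ℕ)} (h : IsAC n Γ) :
    Γ.image Prod.fst ⊆ Finset.Icc 1 n := by
  intro a ha
  obtain ⟨γ, hγ, rfl⟩ := Finset.mem_image.1 ha
  obtain ⟨h1, h2, h3⟩ := mem_roots'.1 (h.1 hγ)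
  exact Finset.mem_Icc.2 ⟨h1, by omega⟩

lemma subQ {n : ℕ} {Γ : Finset (ℕ × ℕ)} (h : IsAC n Γ) :
    Γ.image Prod.snd ⊆ Finset.Icc 1 n := by
  intro a ha
  obtain ⟨γ, hγ, rfl⟩ := Finset.mem_image.1 ha
  obtain ⟨h1, h2, h3⟩ := mem_roots'.1 (h.1 hγ)
  exact Finset.mem_Icc.2 ⟨by omega, h2⟩

lemma countQP {n : ℕ} {Γ : Finset (ℕ × ℕ)} (h : IsAC n Γ) (m : ℕ) :
    ((Γ.image Prod.snd).filter (fun x => x ≤ m)).card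
      ≤ ((Γ.image Prod.fst).filter (fun x => x ≤ m)).card := by
  have e1 : (Γ.image Prod.snd).filter (fun x => x ≤ m)
      = (Γ.filter (fun γ => γ.2 ≤ m)).image Prod.snd := by
    ext b
    simp only [Finset.mem_filter, Finset.mem_image]
    constructor
    · rintro ⟨⟨γ, hγ, rfl⟩, hb⟩
      exact ⟨γ, ⟨hγ, hb⟩, rfl⟩
    · rintro ⟨γ, ⟨hγ, hb⟩, rfl⟩
      exact ⟨⟨γ, hγ, rfl⟩, hb⟩
  have c1 : ((Γ.filter (fun γ => γ.2 ≤ m)).image Prod.snd).card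
      = (Γ.filter (fun γ => γ.2 ≤ m)).card :=
    Finset.card_image_of_injOn (fun p hp q hq he =>
      snd_injOn h p (Finset.mem_of_mem_filter p (Finset.mem_coe.1 hp))
        q (Finset.mem_of_mem_filter q (Finset.mem_coe.1 hq)) he)
  have c2 : ((Γ.filter (fun γ => γ.2 ≤ m)).image Prod.fst).card
      = (Γ.filter (fun γ => γ.2 ≤ m)).card :=
    Finset.card_image_of_injOn (fun p hp q hq he =>
      fst_injOn h p (Finset.mem_of_mem_filter p (Finset.mem_coe.1 hp))
        q (Finset.mem_of_mem_filter q (Finset.mem_coe.1 hq)) he)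
  have hsub : (Γ.filter (fun γ => γ.2 ≤ m)).image Prod.fst
      ⊆ (Γ.image Prod.fst).filter (fun x => x ≤ m) := by
    intro a ha
    obtain ⟨γ, hγ, rfl⟩ := Finset.mem_image.1 ha
    obtain ⟨hγΓ, hγm⟩ := Finset.mem_filter.1 hγ
    obtain ⟨_, _, hij⟩ := mem_roots'.1 (h.1 hγΓ)
    exact Finset.mem_filter.2 ⟨Finset.mem_image.2 ⟨γ, hγΓ, rfl⟩, by omega⟩
  calc ((Γ.image Prod.snd).filter (fun x => x ≤ m)).card
      = (Γ.filter (fun γ => γ.2 ≤ m)).card := by rw [e1, c1]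
    _ = ((Γ.filter (fun γ => γ.2 ≤ m)).image Prod.fst).card := c2.symm
    _ ≤ ((Γ.image Prod.fst).filter (fun x => x ≤ m)).card := Finset.card_le_card hsub

lemma sdiff_filter_card {n m : ℕ} {S : Finset ℕ} (hS : S ⊆ Finset.Icc 1 n) :
    ((Finset.Icc 1 n \ S).filter (fun x => x ≤ m)).card
      = ((Finset.Icc 1 n).filter (fun x => x ≤ m)).card - (S.filter (fun x => x ≤ m)).card := by
  have he : (Finset.Icc 1 n \ S).filter (fun x => x ≤ m)
      = (Finset.Icc 1 n).filter (fun x => x ≤ m) \ S.filter (fun x => x ≤ m) := by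
    ext x
    simp only [Finset.mem_filter, Finset.mem_sdiff]
    constructor
    · rintro ⟨⟨hI, hs⟩, hm⟩
      exact ⟨⟨hI, hm⟩, fun hc => hs hc.1⟩
    · rintro ⟨⟨hI, hm⟩, hs⟩
      exact ⟨⟨hI, fun hc => hs ⟨hc, hm⟩⟩, hm⟩
  rw [he, Finset.card_sdiff_of_subset (Finset.filter_subset_filter _ hS)]

lemma countBA {n : ℕ} {Γ : Finset (ℕ × ℕ)} (h : IsAC n Γ) (m : ℕ) :
    ((Finset.Icc 1 n \ Γ.image Prod.fst).filter (fun x => x ≤ m)).card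
      ≤ ((Finset.Icc 1 n \ Γ.image Prod.snd).filter (fun x => x ≤ m)).card := by
  rw [sdiff_filter_card (subP h), sdiff_filter_card (subQ h)]
  have h1 := countQP h m
  have h2 : ((Γ.image Prod.fst).filter (fun x => x ≤ m)).card
      ≤ ((Finset.Icc 1 n).filter (fun x => x ≤ m)).card :=
    Finset.card_le_card (Finset.filter_subset_filter _ (subP h))
  omega

lemma dualF {n : ℕ} {Q : Finset ℕ} (hQ : Q ⊆ Finset.Icc 1 n) :
    ((Finset.Icc 1 n \ Q).filter (fun a => 2 ≤ a ∧ a - 1 ∉ Finset.Icc 1 n \ Q)).card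
      = (Q.filter (fun b => b + 1 ≤ n ∧ b + 1 ∉ Q)).card := by
  apply Finset.card_bij (fun a _ => a - 1)
  · intro a ha
    obtain ⟨haA, h2a, hnot⟩ := Finset.mem_filter.1 ha
    obtain ⟨haI, haQ⟩ := Finset.mem_sdiff.1 haA
    obtain ⟨h1a, han⟩ := Finset.mem_Icc.1 haI
    have hin : a - 1 ∈ Q := by
      by_contra hq
      exact hnot (Finset.mem_sdiff.2 ⟨Finset.mem_Icc.2 ⟨by omega, by omega⟩, hq⟩)
    refine Finset.mem_filter.2 ⟨hin, by omega, ?_⟩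
    rw [show a - 1 + 1 = a by omega]
    exact haQ
  · intro a ha a' ha' he
    have h2a : 2 ≤ a := (Finset.mem_filter.1 ha).2.1
    have h2a' : 2 ≤ a' := (Finset.mem_filter.1 ha').2.1
    omega
  · intro b hb
    obtain ⟨hbQ, hbn, hbnot⟩ := Finset.mem_filter.1 hb
    obtain ⟨h1b, hbn'⟩ := Finset.mem_Icc.1 (hQ hbQ)
    refine ⟨b + 1, ?_, by omega⟩
    refine Finset.mem_filter.2 ⟨Finset.mem_sdiff.2 ⟨Finset.mem_Icc.2 ⟨by omega, by omega⟩, hbnot⟩,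
      by omega, ?_⟩
    rw [show b + 1 - 1 = b by omega]
    intro hc
    exact (Finset.mem_sdiff.1 hc).2 hbQ

lemma dualG {n : ℕ} {P : Finset ℕ} (hP : P ⊆ Finset.Icc 1 n) :
    ((Finset.Icc 1 n \ P).filter (fun b => b + 1 ≤ n ∧ b + 1 ∉ Finset.Icc 1 n \ P)).card
      = (P.filter (fun a => 2 ≤ a ∧ a - 1 ∉ P)).card := by
  apply Finset.card_bij (fun b _ => b + 1)
  · intro b hb
    obtain ⟨hbB, hbn, hnot⟩ := Finset.mem_filter.1 hb
    obtain ⟨hbI, hbP⟩ := Finset.mem_sdiff.1 hbB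
    obtain ⟨h1b, hbn'⟩ := Finset.mem_Icc.1 hbI
    have hin : b + 1 ∈ P := by
      by_contra hp
      exact hnot (Finset.mem_sdiff.2 ⟨Finset.mem_Icc.2 ⟨by omega, by omega⟩, hp⟩)
    refine Finset.mem_filter.2 ⟨hin, by omega, ?_⟩
    rw [show b + 1 - 1 = b by omega]
    exact hbP
  · intro b hb b' hb' he
    omega
  · intro a ha
    obtain ⟨haP, h2a, hanot⟩ := Finset.mem_filter.1 ha
    obtain ⟨h1a, han⟩ := Finset.mem_Icc.1 (hP haP)
    refine ⟨a - 1, ?_, by omega⟩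
    refine Finset.mem_filter.2 ⟨Finset.mem_sdiff.2 ⟨Finset.mem_Icc.2 ⟨by omega, by omega⟩, hanot⟩,
      by omega, ?_⟩
    rw [show a - 1 + 1 = a by omega]
    intro hc
    exact (Finset.mem_sdiff.1 hc).2 haP

lemma sorted_le_of_count {A B : Finset ℕ}
    (hcount : ∀ m, ((B.filter (fun x => x ≤ m)).card ≤ (A.filter (fun x => x ≤ m)).card))
    {t : ℕ} (htA : t < (A.sort (· ≤ ·)).length) (htB : t < (B.sort (· ≤ ·)).length) :
    (A.sort (· ≤ ·)).getD t 0 ≤ (B.sort (· ≤ ·)).getD t 0 := by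
  set L := A.sort (· ≤ ·) with hL
  set M := B.sort (· ≤ ·) with hM
  rw [List.getD_eq_getElem _ _ htA, List.getD_eq_getElem _ _ htB]
  have hMs : StrictMono M.get := (Finset.sortedLT_sort B).strictMono_get
  have hLs : StrictMono L.get := (Finset.sortedLT_sort A).strictMono_get
  have h1 : t + 1 ≤ (B.filter (fun x => x ≤ M[t])).card := by
    have hcard := Finset.card_le_card_of_injOn (s := Finset.range (t + 1))
        (t := B.filter (fun x => x ≤ M[t])) (fun s => M.getD s 0)
        (by
          intro s hs
          have hs' : s < t + 1 := Finset.mem_range.1 hs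
          have hsM : s < M.length := by omega
          show M.getD s 0 ∈ B.filter (fun x => x ≤ M[t])
          rw [List.getD_eq_getElem _ _ hsM]
          refine Finset.mem_filter.2 ⟨?_, ?_⟩
          · exact (Finset.mem_sort _).1 (List.mem_iff_getElem.2 ⟨s, hsM, rfl⟩)
          · have hmono : M.get ⟨s, hsM⟩ ≤ M.get ⟨t, htB⟩ :=
              hMs.monotone (Fin.mk_le_mk.2 (by omega))
            simpa using hmono)
        (by
          intro s hs s' hs' he
          simp only [Finset.coe_range, Set.mem_Iio] at hs hs'
          have hsM : s < M.length := by omega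
          have hs'M : s' < M.length := by omega
          have he' : M.getD s 0 = M.getD s' 0 := he
          rw [List.getD_eq_getElem _ _ hsM, List.getD_eq_getElem _ _ hs'M] at he'
          have hfin : (⟨s, hsM⟩ : Fin M.length) = ⟨s', hs'M⟩ :=
            hMs.injective (by simpa using he')
          simpa using congrArg Fin.val hfin)
    simpa using hcard
  have h2 : t + 1 ≤ (A.filter (fun x => x ≤ M[t])).card := le_trans h1 (hcount M[t])
  by_contra hab
  push_neg at hab
  have h3 : (A.filter (fun x => x ≤ M[t])).card ≤ t := by
    have hcard := Finset.card_le_card_of_injOn (s := A.filter (fun x => x ≤ M[t]))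
        (t := Finset.range t) (fun x => L.idxOf x)
        (by
          intro x hx
          obtain ⟨hxA, hxb⟩ := Finset.mem_filter.1 hx
          have hxL : x ∈ L := (Finset.mem_sort _).2 hxA
          have hidx : L.idxOf x < L.length := List.idxOf_lt_length_iff.2 hxL
          refine Finset.mem_range.2 ?_
          by_contra hge
          push_neg at hge
          have hmono : L.get ⟨t, htA⟩ ≤ L.get ⟨L.idxOf x, hidx⟩ :=
            hLs.monotone (Fin.mk_le_mk.2 hge)
          have hgx : L[L.idxOf x]'hidx = x := List.getElem_idxOf hidx
          simp only [List.get_eq_getElem] at hmono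
          omega)
        (by
          intro x hx y hy he
          have he' : List.idxOf x L = List.idxOf y L := he
          have hxL : x ∈ L := (Finset.mem_sort _).2 (Finset.mem_filter.1 (Finset.mem_coe.1 hx)).1
          have hyL : y ∈ L := (Finset.mem_sort _).2 (Finset.mem_filter.1 (Finset.mem_coe.1 hy)).1
          have hix : List.idxOf x L < L.length := List.idxOf_lt_length_iff.2 hxL
          have hiy : List.idxOf y L < L.length := List.idxOf_lt_length_iff.2 hyL
          have e1 : L[List.idxOf x L]'hix = x := List.getElem_idxOf hix
          have e2 : L[List.idxOf y L]'hiy = y := List.getElem_idxOf hiy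
          simp only [he'] at e1
          exact e1.symm.trans e2)
    simpa using hcard
  omega

lemma dual_eq (n : ℕ) (Γ : Finset (ℕ × ℕ)) :
    dualAC n Γ = (Finset.range (((Finset.Icc 1 n) \ (Γ.image Prod.snd)).sort (· ≤ ·)).length).image
      (fun t => ((((Finset.Icc 1 n) \ (Γ.image Prod.snd)).sort (· ≤ ·)).getD t 0,
                 (((Finset.Icc 1 n) \ (Γ.image Prod.fst)).sort (· ≤ ·)).getD t 0)) := rfl


/-- For every antichain `Γ` in `Δ⁺(A_n)`, the OY-number is invariant under
duality: `𝒴(Γ*) = 𝒴(Γ)`. -/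
theorem stmt14 (n : ℕ) (hn : 1 ≤ n) (Γ : Finset (ℕ × ℕ)) (hΓ : IsAC n Γ) :
    OY n (dualAC n Γ) = OY n Γ := by
  classical
  set A := (Finset.Icc 1 n) \ (Γ.image Prod.snd) with hA
  set B := (Finset.Icc 1 n) \ (Γ.image Prod.fst) with hB
  set L := A.sort (· ≤ ·) with hL
  set M := B.sort (· ≤ ·) with hM
  have hcardΓP : (Γ.image Prod.fst).card = Γ.card :=
    Finset.card_image_of_injOn (fun p hp q hq he =>
      fst_injOn hΓ p (Finset.mem_coe.1 hp) q (Finset.mem_coe.1 hq) he)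
  have hcardΓQ : (Γ.image Prod.snd).card = Γ.card :=
    Finset.card_image_of_injOn (fun p hp q hq he =>
      snd_injOn hΓ p (Finset.mem_coe.1 hp) q (Finset.mem_coe.1 hq) he)
  have hcardAB : A.card = B.card := by
    rw [hA, hB, Finset.card_sdiff_of_subset (subQ hΓ), Finset.card_sdiff_of_subset (subP hΓ), hcardΓP, hcardΓQ]
  have hlen : L.length = M.length := by
    rw [hL, hM, Finset.length_sort, Finset.length_sort, hcardAB]
  have hdual : dualAC n Γ = (Finset.range L.length).image (fun t => (L.getD t 0, M.getD t 0)) :=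
    dual_eq n Γ
  have hmemL : ∀ t, t < L.length → L.getD t 0 ∈ A := by
    intro t ht
    rw [List.getD_eq_getElem _ _ ht]
    exact (Finset.mem_sort _).1 (List.mem_iff_getElem.2 ⟨t, ht, rfl⟩)
  have hmemM : ∀ t, t < M.length → M.getD t 0 ∈ B := by
    intro t ht
    rw [List.getD_eq_getElem _ _ ht]
    exact (Finset.mem_sort _).1 (List.mem_iff_getElem.2 ⟨t, ht, rfl⟩)
  have hkey : ∀ t, t < L.length → L.getD t 0 ≤ M.getD t 0 := by
    intro t ht
    have htM : t < M.length := by omega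
    exact sorted_le_of_count (fun m => countBA hΓ m) ht htM
  have hLs : StrictMono L.get := (Finset.sortedLT_sort A).strictMono_get
  have hMs : StrictMono M.get := (Finset.sortedLT_sort B).strictMono_get
  have hgetL : ∀ {t t'}, ∀ (ht : t < L.length) (ht' : t' < L.length),
      L.getD t 0 ≤ L.getD t' 0 → t ≤ t' := by
    intro t t' ht ht' hle
    by_contra hc
    push_neg at hc
    have hlt := hLs (show (⟨t', ht'⟩ : Fin L.length) < ⟨t, ht⟩ from hc)
    rw [List.getD_eq_getElem _ _ ht, List.getD_eq_getElem _ _ ht'] at hle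
    simp only [List.get_eq_getElem] at hlt
    omega
  have hgetM : ∀ {t t'}, ∀ (ht : t < M.length) (ht' : t' < M.length),
      M.getD t 0 ≤ M.getD t' 0 → t ≤ t' := by
    intro t t' ht ht' hle
    by_contra hc
    push_neg at hc
    have hlt := hMs (show (⟨t', ht'⟩ : Fin M.length) < ⟨t, ht⟩ from hc)
    rw [List.getD_eq_getElem _ _ ht, List.getD_eq_getElem _ _ ht'] at hle
    simp only [List.get_eq_getElem] at hlt
    omega
  have hmem : ∀ x, x ∈ dualAC n Γ ↔ ∃ t, t < L.length ∧ (L.getD t 0, M.getD t 0) = x := by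
    intro x
    rw [hdual]
    simp only [Finset.mem_image, Finset.mem_range]
  have hACd : IsAC n (dualAC n Γ) := by
    constructor
    · intro x hx
      obtain ⟨t, ht, rfl⟩ := (hmem x).1 hx
      have h1 := Finset.mem_Icc.1 (Finset.mem_sdiff.1 (hmemL t ht)).1
      have h2 := Finset.mem_Icc.1 (Finset.mem_sdiff.1 (hmemM t (by omega))).1
      exact mem_roots'.2 ⟨h1.1, h2.2, hkey t ht⟩
    · intro p hp q hq hpq
      obtain ⟨t, ht, rfl⟩ := (hmem p).1 hp
      obtain ⟨t', ht', rfl⟩ := (hmem q).1 hq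
      have h1 : L.getD t' 0 ≤ L.getD t 0 := hpq.1
      have h2 : M.getD t 0 ≤ M.getD t' 0 := hpq.2
      have e1 : t' ≤ t := hgetL ht' ht h1
      have e2 : t ≤ t' := hgetM (by omega) (by omega) h2
      have het : t = t' := le_antisymm e2 e1
      rw [het]
  have himf : (dualAC n Γ).image Prod.fst = A := by
    ext a
    simp only [Finset.mem_image]
    constructor
    · rintro ⟨x, hx, rfl⟩
      obtain ⟨t, ht, rfl⟩ := (hmem x).1 hx
      exact hmemL t ht
    · intro ha
      have haL : a ∈ L := (Finset.mem_sort _).2 ha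
      obtain ⟨t, ht, hgt⟩ := List.mem_iff_getElem.1 haL
      refine ⟨(L.getD t 0, M.getD t 0), (hmem _).2 ⟨t, ht, rfl⟩, ?_⟩
      show L.getD t 0 = a
      rw [List.getD_eq_getElem _ _ ht]
      exact hgt
  have hims : (dualAC n Γ).image Prod.snd = B := by
    ext b
    simp only [Finset.mem_image]
    constructor
    · rintro ⟨x, hx, rfl⟩
      obtain ⟨t, ht, rfl⟩ := (hmem x).1 hx
      exact hmemM t (by omega)
    · intro hb
      have hbM : b ∈ M := (Finset.mem_sort _).2 hb
      obtain ⟨t, ht, hgt⟩ := List.mem_iff_getElem.1 hbM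
      refine ⟨(L.getD t 0, M.getD t 0), (hmem _).2 ⟨t, by omega, rfl⟩, ?_⟩
      show M.getD t 0 = b
      rw [List.getD_eq_getElem _ _ ht]
      exact hgt
  rw [OY_eq hACd, OY_eq hΓ, himf, hims, hA, hB, dualF (subQ hΓ), dualG (subP hΓ)]
  ring
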